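/- A permutation π of {1, ..., n}, viewed as the word π(1)π(2)...π(n), is not m-divisible (contains no m disjoint consecutive blocks in strictly decreasing lexicographic order) if and only if π has no decreasing subsequence of length m, i.e., π avoids the pattern m(m−1)...1. -/

import Mathlib

/-- A word `W` over an ordered alphabet is `m`-divisible if
`W = v ++ u_1 ++ ⋯ ++ u_m` with the `u_i` nonempty and strictly decreasing
in the lexicographic order. -/
def IsMDivisible {α : Type*} [LT α] (m : ℕ) (W : List α) : Prop :=
  ∃ (v : List α) (us : List (List α)), us.length = m ∧ (∀ u ∈ us, u ≠ []) ∧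
    W = v ++ us.flatten ∧ us.Chain' (fun a b => b < a)

/-- A permutation `π` of `{1,…,n}`, viewed as the word `π(1)π(2)⋯π(n)`, is not
`m`-divisible iff it has no decreasing subsequence of length `m`
(i.e. it avoids the pattern `m(m-1)⋯1`). -/


private lemma head_lt_head' {α} [LinearOrder α] {a b : α} {l l' : List α}
    (h : (a :: l) < (b :: l')) (hne : a ≠ b) : a < b := by
  cases h with
  | cons h => exact absurd rfl hne
  | rel h => exact h

private lemma aux_div {α} [LinearOrder α] (W : List α) : ∀ (k : ℕ) (p : ℕ → ℕ),
    (∀ i, i ≤ k → p i < W.length) →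
    (∀ i, i < k → p i < p (i+1)) →
    (∀ i, i < k → ∀ (h1 : p (i+1) < W.length) (h0 : p i < W.length),
      W[p (i+1)]'h1 < W[p i]'h0) →
    ∃ us : List (List α), us.length = k+1 ∧ (∀ u ∈ us, u ≠ []) ∧
      us.flatten = W.drop (p 0) ∧ us.Chain' (fun a b => b < a) := by
  intro k
  induction k with
  | zero =>
    intro p hb _ _
    refine ⟨[W.drop (p 0)], rfl, ?_, by simp, List.isChain_singleton _⟩
    intro u hu
    simp only [List.mem_singleton] at hu
    subst hu
    have h0 := hb 0 le_rfl
    intro hnil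
    have : W.length - p 0 = 0 := by simpa using congrArg List.length hnil
    omega
  | succ k ih =>
    intro p hb hm hv
    obtain ⟨us, hlen, hne, hfl, hch⟩ := ih (fun i => p (i+1)) (fun i hi => hb (i+1) (by omega))
      (fun i hi => hm (i+1) (by omega)) (fun i hi h1 h0 => hv (i+1) (by omega) h1 h0)
    have h0 : p 0 < W.length := hb 0 (by omega)
    have h01 : p 0 < p 1 := hm 0 (by omega)
    have h1 : p 1 < W.length := hb 1 (by omega)
    set u : List α := (W.drop (p 0)).take (p 1 - p 0) with hu
    have hulen : u.length = p 1 - p 0 := by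
      simp [hu, List.length_take, List.length_drop]; omega
    have hune : u ≠ [] := by
      intro h; rw [h] at hulen; simp at hulen; omega
    have hflat : u ++ us.flatten = W.drop (p 0) := by
      rw [hfl, hu]
      have : W.drop (p 1) = (W.drop (p 0)).drop (p 1 - p 0) := by
        rw [List.drop_drop]; congr 1; omega
      rw [this, List.take_append_drop]
    refine ⟨u :: us, by simp [hlen], ?_, by simpa using hflat, ?_⟩
    · intro w hw
      rcases List.mem_cons.1 hw with h | h
      · exact h ▸ hune
      · exact hne w h
    · simp only [List.Chain', List.isChain_cons]
      refine ⟨?_, hch⟩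
      intro y hy
      rcases us with _ | ⟨u1, rest⟩
      · simp at hlen
      · simp only [List.head?_cons, Option.mem_some_iff] at hy
        subst hy
        have hu1ne : u1 ≠ [] := hne u1 (by simp)
        have hu1head : u1.head hu1ne = W[p 1]'h1 := by
          have e : u1.head hu1ne = ((u1 :: rest).flatten).head (by
            rw [hfl]; intro hc
            have : W.length - p 1 = 0 := by simpa using congrArg List.length hc
            omega) := by
            rw [List.head_eq_getElem, List.head_eq_getElem]
            simp only [List.flatten_cons]
            rw [List.getElem_append_left]
          rw [e]
          simp_rw [hfl]
          rw [List.head_drop]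
        have huhead : u.head hune = W[p 0]'h0 := by
          rw [List.head_take, List.head_drop]
        have hval : W[p 1]'h1 < W[p 0]'h0 := hv 0 (by omega) h1 h0
        have hh : u1.head hu1ne < u.head hune := by
          rw [hu1head, huhead]; exact hval
        calc u1 = u1.head hu1ne :: u1.tail := (List.cons_head_tail _).symm
          _ < u.head hune :: u.tail := List.Lex.rel hh
          _ = u := List.cons_head_tail _

private lemma aux_sub {α} [LinearOrder α] : ∀ (us : List (List α)),
    (∀ u ∈ us, u ≠ []) → us.Chain' (fun a b => b < a) → us.flatten.Nodup →
    ∃ q : ℕ → ℕ, q 0 = 0 ∧ (∀ i, i < us.length → q i < us.flatten.length) ∧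
      (∀ i j, i < j → j < us.length → q i < q j) ∧
      (∀ i j, i < j → j < us.length →
        ∀ (h1 : q j < us.flatten.length) (h2 : q i < us.flatten.length),
        us.flatten[q j]'h1 < us.flatten[q i]'h2) := by
  intro us
  induction us with
  | nil =>
    intro _ _ _
    exact ⟨id, rfl, by simp, by simp, by simp⟩
  | cons u us ih =>
    intro hne hch hnd
    have hune : u ≠ [] := hne u (by simp)
    have hul : 0 < u.length := List.length_pos_iff.2 hune
    simp only [List.Chain', List.isChain_cons] at hch
    have hndf : (u ++ us.flatten).Nodup := by simpa using hnd
    rw [List.nodup_append] at hndf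
    obtain ⟨hndu, hndF, hdisj⟩ := hndf
    obtain ⟨q', hq0, hqb, hqm, hqv⟩ := ih (fun w hw => hne w (by simp [hw])) hch.2 hndF
    refine ⟨fun i => match i with | 0 => 0 | (i+1) => u.length + q' i, rfl, ?_, ?_, ?_⟩
    · intro i hi
      match i with
      | 0 =>
        show (0:ℕ) < ((u :: us).flatten).length
        simp only [List.flatten_cons, List.length_append]
        omega
      | (i+1) =>
        have := hqb i (by simpa using hi)
        show u.length + q' i < ((u :: us).flatten).length
        simp only [List.flatten_cons, List.length_append]
        omega
    · intro i j hij hj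
      match i, j with
      | 0, (j+1) =>
        show (0:ℕ) < u.length + q' j
        omega
      | (i+1), (j+1) =>
        have := hqm i j (by omega) (by simpa using hj)
        show u.length + q' i < u.length + q' j
        omega
    · intro i j hij hj h1 h2
      match i, j with
      | (i+1), (j+1) =>
        have hj' : j < us.length := by simpa using hj
        have hb1 : q' j < us.flatten.length := hqb j hj'
        have hb2 : q' i < us.flatten.length := hqb i (by omega)
        have hlt := hqv i j (by omega) hj' hb1 hb2
        simp only [List.flatten_cons] at h1 h2 ⊢
        rw [List.getElem_append_right (by omega), List.getElem_append_right (by omega)]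
        simp only [Nat.add_sub_cancel_left]
        exact hlt
      | 0, (j+1) =>
        have hj' : j < us.length := by simpa using hj
        rcases us with _ | ⟨u1, rest⟩
        · simp at hj'
        have hu1ne : u1 ≠ [] := hne u1 (by simp)
        have hu1l : 0 < u1.length := List.length_pos_iff.2 hu1ne
        have hb1 : q' j < (u1 :: rest).flatten.length := hqb j hj'
        have hzb : (0:ℕ) < (u1 :: rest).flatten.length := by
          simp only [List.flatten_cons, List.length_append]; omega
        have hle : (u1 :: rest).flatten[q' j]'hb1 ≤ (u1 :: rest).flatten[0]'hzb := by
          rcases Nat.eq_zero_or_pos j with hj0 | hjpos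
          · subst hj0
            simp only [hq0]
            exact le_rfl
          · have h20 : q' 0 < (u1 :: rest).flatten.length := by rw [hq0]; exact hzb
            have := hqv 0 j hjpos hj' hb1 h20
            simp only [hq0] at this
            exact le_of_lt this
        have hF0 : (u1 :: rest).flatten[0]'hzb = u1.head hu1ne := by
          simp only [List.flatten_cons]
          rw [List.getElem_append_left hu1l, List.head_eq_getElem]
        have hlex : u1 < u := hch.1 u1 (by simp)
        have hmem : u1.head hu1ne ∈ (u1 :: rest).flatten := by
          simp only [List.flatten_cons]
          exact List.mem_append_left _ (List.head_mem _)
        have hnehd : u1.head hu1ne ≠ u.head hune := by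
          intro hc
          exact hdisj _ (List.head_mem _) _ hmem hc.symm
        have hheads : u1.head hu1ne < u.head hune := by
          apply head_lt_head' (l := u1.tail) (l' := u.tail) _ hnehd
          rw [List.cons_head_tail, List.cons_head_tail]
          exact hlex
        simp only [List.flatten_cons] at h1 h2 hb1 hzb hle hF0 ⊢
        rw [List.getElem_append_right (by omega), List.getElem_append_left hul]
        simp only [Nat.add_sub_cancel_left]
        exact lt_of_le_of_lt (hle.trans (le_of_eq hF0))
          (hheads.trans_eq (List.head_eq_getElem _))


theorem stmt_5 (n m : ℕ) (π : Equiv.Perm (Fin n)) :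
    (¬ IsMDivisible m (List.ofFn fun i => π i)) ↔
      ¬ ∃ f : Fin m → Fin n, StrictMono f ∧ StrictAnti (fun a => π (f a)) := by
  rw [not_iff_not]
  have hWlen : (List.ofFn fun i => π i).length = n := List.length_ofFn
  constructor
  · rintro ⟨v, us, hlen, hne, hW, hch⟩
    have hndW : (List.ofFn fun i => π i).Nodup := List.nodup_ofFn.2 (Equiv.injective π)
    have hndF : us.flatten.Nodup := (hW ▸ hndW).of_append_right
    obtain ⟨q, hq0, hqb, hqm, hqv⟩ := aux_sub us hne hch hndF
    have hWl : (List.ofFn fun i => π i).length = v.length + us.flatten.length := by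
      rw [hW]; simp
    have hbound : ∀ i : Fin m, v.length + q i < n := by
      intro i
      have := hqb i (hlen ▸ i.isLt)
      omega
    refine ⟨fun i => ⟨v.length + q i, hbound i⟩, ?_, ?_⟩
    · intro a b hab
      have := hqm a b hab (hlen ▸ b.isLt)
      exact Fin.mk_lt_mk.2 (by omega)
    · intro a b hab
      have key : ∀ (i : Fin m), π (⟨v.length + q i, hbound i⟩ : Fin n)
          = us.flatten[q i]'(hqb i (hlen ▸ i.isLt)) := by
        intro i
        have h1 : v.length + q i < (List.ofFn fun i => π i).length := by
          rw [hWlen]; exact hbound i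
        have e1 : (List.ofFn fun i => π i)[v.length + q i]'h1
            = π (⟨v.length + q i, hbound i⟩ : Fin n) := by
          rw [List.getElem_ofFn]
        have e2 : (List.ofFn fun i => π i)[v.length + q i]'h1
            = (v ++ us.flatten)[v.length + q i]'(by rw [← hW]; exact h1) :=
          List.getElem_of_eq hW h1
        rw [← e1, e2, List.getElem_append_right (by omega)]
        simp only [Nat.add_sub_cancel_left]
      simp only [key]
      exact hqv a b hab (hlen ▸ b.isLt) _ _
  · rintro ⟨f, hmono, hanti⟩
    rcases m with _ | k
    · exact ⟨List.ofFn fun i => π i, [], rfl, by simp, by simp, List.isChain_nil⟩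
    · set p : ℕ → ℕ := fun i => if h : i < k+1 then ((f ⟨i, h⟩ : Fin n) : ℕ) else 0 with hp
      have hpval : ∀ i (h : i < k+1), p i = (f ⟨i, h⟩ : ℕ) := by
        intro i h; simp only [hp]; exact dif_pos h
      have H1 : ∀ i, i ≤ k → p i < (List.ofFn fun i => π i).length := by
        intro i hi
        rw [hpval i (by omega), hWlen]
        exact (f _).isLt
      have H2 : ∀ i, i < k → p i < p (i+1) := by
        intro i hi
        rw [hpval i (by omega), hpval (i+1) (by omega)]
        exact hmono (Fin.mk_lt_mk.2 (Nat.lt_succ_self i))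
      have H3 : ∀ i, i < k → ∀ (h1 : p (i+1) < (List.ofFn fun i => π i).length)
          (h0 : p i < (List.ofFn fun i => π i).length),
          (List.ofFn fun i => π i)[p (i+1)]'h1 < (List.ofFn fun i => π i)[p i]'h0 := by
        intro i hi h1 h0
        have hpn1 : p (i+1) < n := by rw [← hWlen]; exact h1
        have hpn0 : p i < n := by rw [← hWlen]; exact h0
        have e1 : (List.ofFn fun j => π j)[p (i+1)]'h1 = π ⟨p (i+1), hpn1⟩ :=
          List.getElem_ofFn _
        have e0 : (List.ofFn fun j => π j)[p i]'h0 = π ⟨p i, hpn0⟩ :=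
          List.getElem_ofFn _
        rw [e1, e0]
        have g1 : (⟨p (i+1), hpn1⟩ : Fin n) = f ⟨i+1, by omega⟩ :=
          Fin.ext (hpval (i+1) (by omega))
        have g0 : (⟨p i, hpn0⟩ : Fin n) = f ⟨i, by omega⟩ :=
          Fin.ext (hpval i (by omega))
        rw [g1, g0]
        exact hanti (Fin.mk_lt_mk.2 (Nat.lt_succ_self i))
      obtain ⟨us, hlen, hne, hfl, hch⟩ := aux_div (List.ofFn fun i => π i) k p H1 H2 H3
      exact ⟨(List.ofFn fun i => π i).take (p 0), us, hlen, hne,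
        by rw [hfl, List.take_append_drop], hch⟩
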